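/- Let G be an edge-critical uniquely 3-colorable graph and let v be a vertex of G of odd degree at least 3, whose cyclic sequence of incident faces (in a planar embedding) consists of exactly one 4-face with all other incident faces triangles. Then no such vertex exists; equivalently, any vertex of G incident with exactly one 4-face and otherwise only 3-faces has even degree. -/

import Mathlib

open SimpleGraph

/-- `G` is uniquely `k`-colorable: its chromatic number is `k` and all proper
`k`-colorings induce the same partition of the vertex set into color classes. -/
def UniquelyKColorable {V : Type} (G : SimpleGraph V) (k : ℕ) : Prop :=
  G.chromaticNumber = k ∧
    ∀ c₁ c₂ : G.Coloring (Fin k), ∀ u v : V, c₁ u = c₁ v ↔ c₂ u = c₂ v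

/-- `G` is an edge-critical uniquely `k`-colorable graph. -/
def EdgeCritical {V : Type} (G : SimpleGraph V) (k : ℕ) : Prop :=
  UniquelyKColorable G k ∧
    ∀ e ∈ G.edgeSet, ¬ UniquelyKColorable (G.deleteEdges {e}) k

/-- A combinatorial plane embedding of `G`: a family of faces, each with a closed
boundary walk, such that every edge lies on face boundaries exactly twice in total,
and Euler's formula holds. -/
structure PlaneEmbedding {V : Type} [DecidableEq V] (G : SimpleGraph V) where
  Faces : Type
  [facesFintype : Fintype Faces]
  boundary : Faces → Σ v : V, G.Walk v v
  edge_count : ∀ e ∈ G.edgeSet, (∑ f : Faces, ((boundary f).2.edges.count e)) = 2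
  euler : Nat.card V + Nat.card Faces = G.edgeSet.ncard + 1 + Nat.card G.ConnectedComponent

attribute [instance] PlaneEmbedding.facesFintype

/-- The degree of a face: the length of its boundary walk (cut edges counted twice). -/
def PlaneEmbedding.fdeg {V : Type} [DecidableEq V] {G : SimpleGraph V}
    (emb : PlaneEmbedding G) (f : emb.Faces) : ℕ :=
  (emb.boundary f).2.length

def Planar {V : Type} [DecidableEq V] (G : SimpleGraph V) : Prop :=
  Nonempty (PlaneEmbedding G)

/-- Outerplanar: a plane embedding with one face incident with all vertices. -/
def Outerplanar {V : Type} [DecidableEq V] (G : SimpleGraph V) : Prop :=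
  ∃ emb : PlaneEmbedding G, ∃ f : emb.Faces, ∀ v : V, v ∈ (emb.boundary f).2.support

def MaximalOuterplanar {V : Type} [DecidableEq V] (G : SimpleGraph V) : Prop :=
  Outerplanar G ∧ ∀ u v : V, u ≠ v → ¬ G.Adj u v →
    ¬ Outerplanar (G ⊔ SimpleGraph.fromEdgeSet {s(u, v)})

/-- `s` is the edge set of a cycle of `G`. -/
def IsCycleSet {V : Type} (G : SimpleGraph V) (s : Set (Sym2 V)) : Prop :=
  ∃ (v : V) (w : G.Walk v v), w.IsCycle ∧ {e | e ∈ w.edges} = s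

/-- Two cycles (given by their edge sets) are dependent: joined by a chain of cycles
in which consecutive cycles share an edge and all intermediate cycles have 4 vertices. -/
def Dependent {V : Type} (G : SimpleGraph V) (s s' : Set (Sym2 V)) : Prop :=
  ∃ (t : ℕ) (C : Fin (t + 2) → Set (Sym2 V)),
    (∀ i, IsCycleSet G (C i)) ∧ C 0 = s ∧ C (Fin.last (t + 1)) = s' ∧
    (∀ i : Fin (t + 1), (C i.castSucc ∩ C i.succ).Nonempty) ∧
    ∀ i : Fin (t + 2), i ≠ 0 → i ≠ Fin.last (t + 1) → (C i).ncard = 4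

/-- `G` has no separating 3-cycle: deleting the vertices of any triangle leaves a
connected graph. -/
def NoSeparating3Cycle {V : Type} (G : SimpleGraph V) : Prop :=
  ∀ s : Finset V, G.IsNClique 3 s → (G.induce {v : V | v ∉ s}).Connected

/-- `H` is a triangle-subgraph of `G`: the union of a sequence of triangles each of
which (after the first) shares an edge with an earlier one. -/
def IsTriangleSubgraph {V : Type} (G : SimpleGraph V) (H : G.Subgraph) : Prop :=
  ∃ (t : ℕ) (T : Fin (t + 1) → Finset V),
    (∀ i, G.IsNClique 3 (T i)) ∧
    (∀ j : Fin (t + 1), j ≠ 0 →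
      ∃ i : Fin (t + 1), i < j ∧ ((T i : Set V) ∩ (T j : Set V)).ncard = 2) ∧
    H = ⨆ i, (⊤ : G.Subgraph).induce (T i : Set V)

def MaximalTriangleSubgraph {V : Type} (G : SimpleGraph V) (H : G.Subgraph) : Prop :=
  IsTriangleSubgraph G H ∧ ∀ H' : G.Subgraph, IsTriangleSubgraph G H' → ¬ H < H'

/-- The set of edges of `G` with one end in `A` and the other in `B`. -/
def edgesBetween {V : Type} (G : SimpleGraph V) (A B : Set V) : Set (Sym2 V) :=
  {e | ∃ a ∈ A, ∃ b ∈ B, G.Adj a b ∧ e = s(a, b)}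
/-- In an edge-critical uniquely 3-colorable plane graph, a vertex incident with
exactly one 4-face and otherwise only triangular faces has even degree. The local
structure is given by the rotation of neighbors `n 0, …, n (d-1)` of `v`: consecutive
neighbors are adjacent (triangular faces), and `v, n 0, u, n (d-1)` bounds the 4-face. -/
private lemma fin3_aux : ∀ a x y z : Fin 3, x ≠ a → y ≠ a → z ≠ a → y ≠ x → z ≠ y → z = x := by
  decide

private lemma fin2_aux : ∀ a b c : Fin 2, a ≠ b → a ≠ c → b ≠ c → False := by
  decide

theorem stmt_5 {V : Type} (G : SimpleGraph V) (hG : EdgeCritical G 3)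
    (v : V) (d : ℕ) (hd : 3 ≤ d) (n : Fin d → V) (hinj : Function.Injective n)
    (hnbr : ∀ i, G.Adj v (n i)) (hall : ∀ w, G.Adj v w → ∃ i, w = n i)
    (hcons : ∀ i j : Fin d, (j : ℕ) = (i : ℕ) + 1 → G.Adj (n i) (n j))
    (u : V) (hu : ¬ G.Adj v u) (huv : u ≠ v)
    (hu0 : G.Adj u (n ⟨0, by omega⟩)) (hud : G.Adj u (n ⟨d - 1, by omega⟩)) :
    Even d := by
  by_contra hodd
  rcases Nat.even_or_odd d with hev | ho
  · exact hodd hev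
  obtain ⟨m, hm⟩ := ho
  set i0 : Fin d := ⟨0, by omega⟩ with hi0
  set id1 : Fin d := ⟨d - 1, by omega⟩ with hid1
  set e : Sym2 V := s(u, n i0) with he
  have hne_un : ∀ i : Fin d, u ≠ n i := fun i h => hu (h ▸ hnbr i)
  set H := G.deleteEdges {e} with hH
  -- adjacency facts inside H
  have hHvn : ∀ i : Fin d, H.Adj v (n i) := by
    intro i
    rw [hH, SimpleGraph.deleteEdges_adj]
    refine ⟨hnbr i, ?_⟩
    rw [Set.mem_singleton_iff, he, Sym2.eq_iff]
    rintro (⟨rfl, -⟩ | ⟨hv, -⟩)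
    · exact huv rfl
    · exact (hnbr i0).ne hv
  have hHcons : ∀ (k : ℕ) (h : k + 1 < d),
      H.Adj (n ⟨k, by omega⟩) (n ⟨k + 1, h⟩) := by
    intro k h
    rw [hH, SimpleGraph.deleteEdges_adj]
    refine ⟨hcons ⟨k, by omega⟩ ⟨k + 1, h⟩ rfl, ?_⟩
    rw [Set.mem_singleton_iff, he, Sym2.eq_iff]
    rintro (⟨hku, -⟩ | ⟨-, hku⟩)
    · exact hne_un _ hku.symm
    · exact hne_un _ hku.symm
  have hHud : H.Adj u (n id1) := by
    rw [hH, SimpleGraph.deleteEdges_adj]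
    refine ⟨hud, ?_⟩
    rw [Set.mem_singleton_iff, he, Sym2.eq_iff]
    rintro (⟨-, hdd⟩ | ⟨hun, -⟩)
    · have : id1 = i0 := hinj hdd
      rw [hid1, hi0, Fin.mk.injEq] at this
      omega
    · exact hne_un _ hun
  -- every 3-coloring of H separates u from n i0
  have key : ∀ c' : H.Coloring (Fin 3), c' u ≠ c' (n i0) := by
    intro c'
    have ha : ∀ i, c' (n i) ≠ c' v := fun i => (c'.valid (hHvn i)).symm
    have alt : ∀ k (h : k < d),
        (Even k → c' (n ⟨k, h⟩) = c' (n i0)) ∧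
        (¬ Even k → c' (n ⟨k, h⟩) ≠ c' (n i0)) := by
      intro k
      induction k with
      | zero =>
        intro h
        exact ⟨fun _ => rfl, fun h' => absurd Even.zero h'⟩
      | succ k ih =>
        intro h
        have hk : k < d := by omega
        obtain ⟨ih1, ih2⟩ := ih hk
        have hadj := c'.valid (hHcons k h)
        constructor
        · intro hev
          have hkodd : ¬ Even k := by
            rw [Nat.even_add_one] at hev; exact hev
          exact fin3_aux (c' v) (c' (n i0)) (c' (n ⟨k, hk⟩)) (c' (n ⟨k + 1, h⟩))
            (ha i0) (ha _) (ha _) (ih2 hkodd) hadj.symm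
        · intro hnev
          have hkev : Even k := by
            rw [Nat.even_add_one] at hnev; exact not_not.mp hnev
          rw [← ih1 hkev]
          exact hadj.symm
    have hd1 : Even (d - 1) := ⟨m, by omega⟩
    have heq : c' (n id1) = c' (n i0) := (alt (d - 1) (by omega)).1 hd1
    have huneq := c'.valid hHud
    rw [heq] at huneq
    exact huneq
  -- every 3-coloring of H is a coloring of G
  have key2 : ∀ c' : H.Coloring (Fin 3), ∀ {x y : V}, G.Adj x y → c' x ≠ c' y := by
    intro c' x y hxy hcc
    by_cases hcase : s(x, y) = e
    · rw [he, Sym2.eq_iff] at hcase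
      rcases hcase with ⟨rfl, rfl⟩ | ⟨rfl, rfl⟩
      · exact key c' hcc
      · exact key c' hcc.symm
    · exact c'.valid (by
        rw [hH, SimpleGraph.deleteEdges_adj]
        exact ⟨hxy, by simpa using hcase⟩) hcc
  have hGcol : G.Colorable 3 :=
    SimpleGraph.chromaticNumber_le_iff_colorable.mp (le_of_eq hG.1.1)
  have hHcol : H.Colorable 3 := hGcol.mono_left (SimpleGraph.deleteEdges_le _)
  have hmem : e ∈ G.edgeSet := by rw [he]; exact hu0
  apply hG.2 e hmem
  constructor
  · -- chromatic number of H is 3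
    have h2 : ¬ H.Colorable 2 := by
      rintro ⟨c2⟩
      have i1 : Fin d := ⟨1, by omega⟩
      have h01 : H.Adj (n i0) (n ⟨1, by omega⟩) := hHcons 0 (by omega)
      exact fin2_aux (c2 v) (c2 (n i0)) (c2 (n ⟨1, by omega⟩))
        (c2.valid (hHvn i0)) (c2.valid (hHvn ⟨1, by omega⟩)) (c2.valid h01)
    have h2' : ¬ (H.chromaticNumber ≤ (2 : ℕ)) :=
      fun hle => h2 (SimpleGraph.chromaticNumber_le_iff_colorable.mp hle)
    have hlt : ((2 : ℕ) : ℕ∞) < H.chromaticNumber := not_le.mp h2'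
    have h3le : ((2 : ℕ) : ℕ∞) + 1 ≤ H.chromaticNumber :=
      (ENat.add_one_le_iff (by simp)).mpr hlt
    refine le_antisymm hHcol.chromaticNumber_le ?_
    exact le_trans (by norm_num) h3le
  · intro c₁ c₂ x y
    exact hG.1.2 (SimpleGraph.Coloring.mk c₁ (fun hxy => key2 c₁ hxy))
      (SimpleGraph.Coloring.mk c₂ (fun hxy => key2 c₂ hxy)) x y
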